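/- The 1-form λ on ℝ⁴ is a primitive of ω_A: for every p ∈ ℝ⁴ and all u,v ∈ ℝ⁴, (fderiv λ p u)(v) − (fderiv λ p v)(u) = ω_A(p)(u,v); that is, dλ = ω_A. -/

import Mathlib

noncomputable section

/-- The 1-form λ = −½(x₁²+x₂²−2x₃²)dθ + x₂x₃dx₁ − x₁x₃dx₂ on ℝ⁴. -/
def lamA (p v : Fin 4 → ℝ) : ℝ :=
  -(1 / 2) * (p 1 ^ 2 + p 2 ^ 2 - 2 * p 3 ^ 2) * v 0 + p 2 * p 3 * v 1 - p 1 * p 3 * v 2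

/-- The 2-form ω_A = x₁(dθ∧dx₁+dx₂∧dx₃) + x₂(dθ∧dx₂+dx₃∧dx₁) − 2x₃(dθ∧dx₃+dx₁∧dx₂). -/
def omegaA (p u v : Fin 4 → ℝ) : ℝ :=
  p 1 * (u 0 * v 1 - u 1 * v 0 + u 2 * v 3 - u 3 * v 2)
  + p 2 * (u 0 * v 2 - u 2 * v 0 + u 3 * v 1 - u 1 * v 3)
  + (-2 * p 3) * (u 0 * v 3 - u 3 * v 0 + u 1 * v 2 - u 2 * v 1)

lemma key (p v u : Fin 4 → ℝ) :
    fderiv ℝ (fun q => lamA q v) p u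
      = -(1/2) * (2 * p 1 * u 1 + 2 * p 2 * u 2 - 2 * (2 * p 3 * u 3)) * v 0
        + (u 2 * p 3 + p 2 * u 3) * v 1 - (u 1 * p 3 + p 1 * u 3) * v 2 := by
  have hi : ∀ i : Fin 4, HasFDerivAt (fun q : Fin 4 → ℝ => q i)
      (ContinuousLinearMap.proj (R := ℝ) (φ := fun _ : Fin 4 => ℝ) i) p := fun i => by exact hasFDerivAt_apply i p
  have hf : (fun q : Fin 4 → ℝ => lamA q v)
      = fun q => -(1/2) * (q 1 * q 1 + q 2 * q 2 - 2 * (q 3 * q 3)) * v 0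
          + q 2 * q 3 * v 1 - q 1 * q 3 * v 2 := by
    funext q; unfold lamA; ring
  have h1 := (((hi 1).mul (hi 1)).add ((hi 2).mul (hi 2))).sub (((hi 3).mul (hi 3)).const_mul 2)
  have h2 := (h1.const_mul (-(1/2) : ℝ)).mul_const (v 0)
  have h3 := h2.add (((hi 2).mul (hi 3)).mul_const (v 1))
  have h := h3.sub (((hi 1).mul (hi 3)).mul_const (v 2))
  rw [hf]
  erw [h.fderiv]
  simp
  ring

/-- λ is a primitive of ω_A: dλ = ω_A. -/
theorem dlambda_eq_omegaA :
    ∀ p u v : Fin 4 → ℝ,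
      fderiv ℝ (fun q => lamA q v) p u - fderiv ℝ (fun q => lamA q u) p v
        = omegaA p u v := by
  intro p u v
  rw [key, key, omegaA]
  ring
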